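/- Let A be a commutative ring and A⁺ ⊆ A a subring integrally closed in A. For elements t₁, …, t_m, f of A, say that a valuation v on A with v(a) ≤ 1 for all a ∈ A⁺ lies in U(t₁,…,t_m/f) if v(t_k) ≤ v(f) for all k and v(f) ≠ 0. Suppose given finitely many families (g_{1,i}, …, g_{m_i,i}, f_i) in A for i = 1, …, n such that every valuation v on A (with values in any linearly ordered commutative group with zero) satisfying v(A⁺) ≤ 1 lies in U_i := U(g_{1,i},…,g_{m_i,i}, f_i / f_i) for some i. Then there exist finitely many elements s₁, …, s_N ∈ A generating the unit ideal of A such that for every j ∈ {1,…,N} there is some i ∈ {1,…,n} with the property that every valuation v on A with v(A⁺) ≤ 1 lying in U(s₁,…,s_N/s_j) lies in U_i. -/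

import Mathlib

/-!
STATEMENT 18: Refinement of covers of `Spa(A, A⁺)` by standard rational covers.
Given finitely many families `(g₁ᵢ, …, g_{mᵢ,i}, fᵢ)` such that every valuation `v` on `A`
with `v ≤ 1` on `A⁺` lies in some `U(g_{1,i},…,g_{mᵢ,i},fᵢ / fᵢ)`, there are elements
`s₁, …, s_N` generating the unit ideal such that each `U(s₁,…,s_N / sⱼ)` is contained
in some `U_i`.
-/

universe u v w

set_option linter.unusedSectionVars false
set_option linter.unusedVariables false
set_option maxHeartbeats 1000000

namespace StdRefine

variable {ι : Type v} (U : Ultrafilter ι) (Γ : ι → Type w)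
variable [∀ i, LinearOrderedCommGroupWithZero (Γ i)]

def uSetoid : Setoid (∀ i, Γ i) where
  r x y := ∀ᶠ i in (U : Filter ι), x i = y i
  iseqv := ⟨fun _ => Filter.Eventually.of_forall (fun _ => rfl),
            fun h => h.mono fun _ e => e.symm,
            fun h1 h2 => (h1.and h2).mono fun _ e => e.1.trans e.2⟩

def UProd := Quotient (uSetoid U Γ)

namespace UProd

variable {U Γ}

def mk (x : ∀ i, Γ i) : UProd U Γ := Quotient.mk (uSetoid U Γ) x

lemma mk_eq_mk {x y : ∀ i, Γ i} : (mk x : UProd U Γ) = mk y ↔ ∀ᶠ i in (U : Filter ι), x i = y i :=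
  ⟨fun h => @Quotient.exact _ (uSetoid U Γ) _ _ h, fun h => @Quotient.sound _ (uSetoid U Γ) _ _ h⟩

omit [∀ i, LinearOrderedCommGroupWithZero (Γ i)] in
@[elab_as_elim]
lemma ind {motive : UProd U Γ → Prop} (h : ∀ x, motive (mk x)) : ∀ q, motive q :=
  Quotient.ind h

instance : Mul (UProd U Γ) :=
  ⟨Quotient.map₂ (fun x y i => x i * y i)
    (fun _ _ h1 _ _ h2 => (h1.and h2).mono fun _ e => by simp only [e.1, e.2])⟩

instance : One (UProd U Γ) := ⟨mk fun _ => 1⟩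
instance : Zero (UProd U Γ) := ⟨mk fun _ => 0⟩

instance : Inv (UProd U Γ) :=
  ⟨Quotient.map (fun x i => (x i)⁻¹) (fun _ _ h => h.mono fun _ e => by simp only [e])⟩

lemma mk_mul (x y : ∀ i, Γ i) : (mk x * mk y : UProd U Γ) = mk (fun i => x i * y i) := rfl
lemma one_def : (1 : UProd U Γ) = mk (fun _ => 1) := rfl
lemma zero_def : (0 : UProd U Γ) = mk (fun _ => 0) := rfl
lemma mk_inv (x : ∀ i, Γ i) : (mk x)⁻¹ = (mk (fun i => (x i)⁻¹) : UProd U Γ) := rfl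

instance : LE (UProd U Γ) :=
  ⟨Quotient.lift₂ (fun x y => ∀ᶠ i in (U : Filter ι), x i ≤ y i)
    (by
      intro x y x' y' hx hy
      refine propext ⟨fun h => ?_, fun h => ?_⟩
      · exact ((h.and hx).and hy).mono fun i e => e.1.2 ▸ e.2 ▸ e.1.1
      · exact ((h.and hx).and hy).mono fun i e => e.1.2 ▸ e.2 ▸ e.1.1)⟩

lemma mk_le_mk {x y : ∀ i, Γ i} : (mk x : UProd U Γ) ≤ mk y ↔ ∀ᶠ i in (U : Filter ι), x i ≤ y i :=
  Iff.rfl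

noncomputable instance : LinearOrder (UProd U Γ) where
  le_refl := by
    refine ind fun x => ?_
    exact Filter.Eventually.of_forall fun i => le_refl _
  le_trans := by
    refine ind fun x => ind fun y => ind fun z => ?_
    intro h1 h2
    exact ((h1 : ∀ᶠ i in _, _).and h2).mono fun i e => e.1.trans e.2
  le_antisymm := by
    refine ind fun x => ind fun y => ?_
    intro h1 h2
    exact @Quotient.sound _ (uSetoid U Γ) _ _ (((h1 : ∀ᶠ i in _, _).and h2).mono fun i e => le_antisymm e.1 e.2)
  le_total := by
    refine ind fun x => ind fun y => ?_
    rcases Ultrafilter.mem_or_compl_mem U {i | x i ≤ y i} with h | h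
    · exact Or.inl h
    · exact Or.inr (Filter.mem_of_superset h (fun i hi => le_of_not_ge hi))
  toDecidableLE := fun _ _ => Classical.dec _

instance : CommMonoid (UProd U Γ) where
  mul_assoc := by
    refine ind fun x => ind fun y => ind fun z => ?_
    exact @Quotient.sound _ (uSetoid U Γ) _ _ (Filter.Eventually.of_forall fun i => mul_assoc _ _ _)
  one_mul := by
    refine ind fun x => ?_
    exact @Quotient.sound _ (uSetoid U Γ) _ _ (Filter.Eventually.of_forall fun i => one_mul _)
  mul_one := by
    refine ind fun x => ?_
    exact @Quotient.sound _ (uSetoid U Γ) _ _ (Filter.Eventually.of_forall fun i => mul_one _)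
  mul_comm := by
    refine ind fun x => ind fun y => ?_
    exact @Quotient.sound _ (uSetoid U Γ) _ _ (Filter.Eventually.of_forall fun i => mul_comm _ _)

noncomputable instance : LinearOrderedCommGroupWithZero (UProd U Γ) where
  __ := (inferInstance : CommMonoid (UProd U Γ))
  __ := (inferInstance : LinearOrder (UProd U Γ))
  mul_lt_mul_of_pos_left := by
    refine ind fun a => ?_
    intro ha
    refine ind fun b => ind fun c => ?_
    intro hbc
    rw [← not_le] at ha hbc ⊢
    have ha' : ∀ᶠ i in (U : Filter ι), ¬ a i ≤ 0 := Ultrafilter.eventually_not.2 ha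
    have hbc' : ∀ᶠ i in (U : Filter ι), ¬ c i ≤ b i := Ultrafilter.eventually_not.2 hbc
    intro h
    have h' : ∀ᶠ i in (U : Filter ι), a i * c i ≤ a i * b i := h
    obtain ⟨i, ⟨h1, h2⟩, h3⟩ := ((ha'.and hbc').and h').exists
    exact (not_le.2 (mul_lt_mul_of_pos_left (lt_of_not_ge h2) (lt_of_not_ge h1))) h3
  bot := 0
  bot_le := ind fun x => Filter.Eventually.of_forall fun i => zero_le'
  isBot_zero := ind fun x => Filter.Eventually.of_forall fun i => zero_le'
  zero_mul := by
    refine ind fun x => ?_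
    exact @Quotient.sound _ (uSetoid U Γ) _ _ (Filter.Eventually.of_forall fun i => zero_mul _)
  mul_zero := by
    refine ind fun x => ?_
    exact @Quotient.sound _ (uSetoid U Γ) _ _ (Filter.Eventually.of_forall fun i => mul_zero _)
  exists_pair_ne := by
    refine ⟨0, 1, fun h => ?_⟩
    have := mk_eq_mk.1 h
    rcases this.exists with ⟨i, hi⟩
    exact zero_ne_one hi
  inv_zero := @Quotient.sound _ (uSetoid U Γ) _ _ (Filter.Eventually.of_forall fun i => inv_zero)
  mul_inv_cancel := by
    refine ind fun x => ?_
    intro hx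
    have hne : ∀ᶠ i in (U : Filter ι), x i ≠ 0 := by
      rw [Ultrafilter.eventually_not]
      intro h
      exact hx (@Quotient.sound _ (uSetoid U Γ) _ _ h)
    exact @Quotient.sound _ (uSetoid U Γ) _ _ (hne.mono fun i e => mul_inv_cancel₀ e)

end UProd


section UVal

variable {ι : Type v} (U : Ultrafilter ι) (Γ : ι → Type w)
variable [∀ i, LinearOrderedCommGroupWithZero (Γ i)]
variable {A : Type u} [CommRing A]

open UProd

noncomputable def uVal (v : ∀ i, Valuation A (Γ i)) : Valuation A (UProd U Γ) where
  toFun a := mk fun i => v i a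
  map_zero' := congrArg mk (funext fun i => (v i).map_zero)
  map_one' := congrArg mk (funext fun i => (v i).map_one)
  map_mul' x y := congrArg mk (funext fun i => (v i).map_mul x y)
  map_add_le_max' x y := by
    rcases Ultrafilter.mem_or_compl_mem U {i | v i x ≤ v i y} with h | h
    · refine le_max_iff.2 (Or.inr ?_)
      refine (mk_le_mk).2 ?_
      refine Filter.mem_of_superset h ?_
      intro i hi
      exact le_trans ((v i).map_add x y) (max_le hi (le_refl _))
    · refine le_max_iff.2 (Or.inl ?_)
      refine (mk_le_mk).2 ?_
      refine Filter.mem_of_superset h ?_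
      intro i hi
      have hyx : v i y ≤ v i x := le_of_not_ge hi
      exact le_trans ((v i).map_add x y) (max_le (le_refl _) hyx)

lemma uVal_apply (v : ∀ i, Valuation A (Γ i)) (a : A) :
    uVal U Γ v a = mk (fun i => v i a) := rfl

lemma uVal_le_iff (v : ∀ i, Valuation A (Γ i)) (a b : A) :
    uVal U Γ v a ≤ uVal U Γ v b ↔ ∀ᶠ i in (U : Filter ι), v i a ≤ v i b := Iff.rfl

lemma one_le_uVal_iff (v : ∀ i, Valuation A (Γ i)) (a : A) :
    1 ≤ uVal U Γ v a ↔ ∀ᶠ i in (U : Filter ι), 1 ≤ v i a := Iff.rfl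

end UVal


section Trunc

variable {A : Type u} [CommRing A]
variable {Γ₀ : Type w} [LinearOrderedCommGroupWithZero Γ₀]

/-- The convex "window" subset generated by values `≥ 1`. -/
def Hset (v : Valuation A Γ₀) : Set Γ₀ :=
  {γ | ∃ c : A, 1 ≤ v c ∧ (v c)⁻¹ ≤ γ ∧ γ ≤ v c}

lemma Hset.ne_zero {v : Valuation A Γ₀} {γ : Γ₀} (h : γ ∈ Hset v) : γ ≠ 0 := by
  rcases h with ⟨c, hc1, hc2, _⟩
  have hc0 : v c ≠ 0 := (zero_lt_one.trans_le hc1).ne'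
  have : (0:Γ₀) < (v c)⁻¹ := lt_of_le_of_ne zero_le' (Ne.symm (inv_ne_zero hc0))
  exact (this.trans_le hc2).ne'

lemma Hset.one_mem (v : Valuation A Γ₀) : (1:Γ₀) ∈ Hset v :=
  ⟨1, by simp, by simp, by simp⟩

lemma Hset.of_one_le {v : Valuation A Γ₀} {a : A} (h : 1 ≤ v a) : v a ∈ Hset v := by
  refine ⟨a, h, ?_, le_refl _⟩
  calc (v a)⁻¹ ≤ 1⁻¹ := by
        apply inv_le_inv₀ ?_ ?_ |>.2 h
        · exact zero_lt_one.trans_le h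
        · exact zero_lt_one
    _ = 1 := inv_one
    _ ≤ v a := h

lemma Hset.mul_mem {v : Valuation A Γ₀} {γ δ : Γ₀} (hγ : γ ∈ Hset v) (hδ : δ ∈ Hset v) :
    γ * δ ∈ Hset v := by
  rcases hγ with ⟨c, hc1, hc2, hc3⟩
  rcases hδ with ⟨d, hd1, hd2, hd3⟩
  refine ⟨c * d, ?_, ?_, ?_⟩
  · rw [Valuation.map_mul]
    calc (1:Γ₀) = 1 * 1 := (one_mul 1).symm
      _ ≤ v c * v d := mul_le_mul' hc1 hd1
  · rw [Valuation.map_mul, mul_inv]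
    exact mul_le_mul' hc2 hd2
  · rw [Valuation.map_mul]
    exact mul_le_mul' hc3 hd3

lemma pos_of_ne_zero {γ : Γ₀} (h : γ ≠ 0) : (0:Γ₀) < γ :=
  lt_of_le_of_ne zero_le' (Ne.symm h)

lemma Hset.inv_mem {v : Valuation A Γ₀} {γ : Γ₀} (hγ : γ ∈ Hset v) : γ⁻¹ ∈ Hset v := by
  rcases hγ with ⟨c, hc1, hc2, hc3⟩
  have hγ0 : γ ≠ 0 := Hset.ne_zero ⟨c, hc1, hc2, hc3⟩
  have hc0 : v c ≠ 0 := (zero_lt_one.trans_le hc1).ne'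
  have hγpos : (0:Γ₀) < γ := pos_of_ne_zero hγ0
  have hvcpos : (0:Γ₀) < v c := pos_of_ne_zero hc0
  have hvcinvpos : (0:Γ₀) < (v c)⁻¹ := pos_of_ne_zero (inv_ne_zero hc0)
  refine ⟨c, hc1, ?_, ?_⟩
  · exact (inv_le_inv₀ hvcpos hγpos).2 hc3
  · have : γ⁻¹ ≤ ((v c)⁻¹)⁻¹ := (inv_le_inv₀ hγpos hvcinvpos).2 hc2
    rwa [inv_inv] at this

lemma Hset.lt_of_not_mem {v : Valuation A Γ₀} {a : A} (ha : v a ∉ Hset v) {γ : Γ₀}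
    (hγ : γ ∈ Hset v) : v a < γ := by
  by_contra hcon
  push_neg at hcon
  rcases hγ with ⟨c, hc1, hc2, hc3⟩
  by_cases hle : v a ≤ v c
  · exact ha ⟨c, hc1, le_trans hc2 hcon, hle⟩
  · push_neg at hle
    have : 1 ≤ v a := le_trans hc1 hle.le
    exact ha (Hset.of_one_le this)

end Trunc


section Trunc2

variable {A : Type u} [CommRing A]
variable {Γ₀ : Type w} [LinearOrderedCommGroupWithZero Γ₀]

open Classical in
/-- Truncation of a valuation to the convex window generated by values `≥ 1`. -/
noncomputable def trunc (v : Valuation A Γ₀) : Valuation A Γ₀ where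
  toFun a := if v a ∈ Hset v then v a else 0
  map_zero' := by
    have : (v (0:A)) ∉ Hset v := by
      rw [Valuation.map_zero]
      intro h
      exact Hset.ne_zero h rfl
    simp [this]
  map_one' := by
    have h1 : (v (1:A)) ∈ Hset v := by rw [Valuation.map_one]; exact Hset.one_mem v
    show (if v (1:A) ∈ Hset v then v (1:A) else 0) = 1
    rw [if_pos h1, Valuation.map_one]
  map_mul' x y := by
    by_cases hx : v x ∈ Hset v <;> by_cases hy : v y ∈ Hset v
    · have hxy : v (x * y) ∈ Hset v := by
        rw [Valuation.map_mul]; exact Hset.mul_mem hx hy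
      show (if v (x*y) ∈ Hset v then v (x*y) else 0)
          = (if v x ∈ Hset v then v x else 0) * (if v y ∈ Hset v then v y else 0)
      rw [if_pos hxy, if_pos hx, if_pos hy, Valuation.map_mul]
    · -- v y ∉ H : product not in H
      have hxy : v (x * y) ∉ Hset v := by
        rw [Valuation.map_mul]
        intro hmem
        have hx0 : v x ≠ 0 := by
          intro h0
          rw [h0, zero_mul] at hmem
          exact Hset.ne_zero hmem rfl
        have : v y = (v x)⁻¹ * (v x * v y) := by
          rw [← mul_assoc, inv_mul_cancel₀ hx0, one_mul]
        rw [this] at hy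
        exact hy (Hset.mul_mem (Hset.inv_mem hx) hmem)
      show (if v (x*y) ∈ Hset v then v (x*y) else 0)
          = (if v x ∈ Hset v then v x else 0) * (if v y ∈ Hset v then v y else 0)
      rw [if_neg hxy, if_pos hx, if_neg hy, mul_zero]
    · have hxy : v (x * y) ∉ Hset v := by
        rw [Valuation.map_mul]
        intro hmem
        have hy0 : v y ≠ 0 := by
          intro h0
          rw [h0, mul_zero] at hmem
          exact Hset.ne_zero hmem rfl
        have : v x = (v y)⁻¹ * (v x * v y) := by
          rw [mul_comm (v x) (v y), ← mul_assoc, inv_mul_cancel₀ hy0, one_mul]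
        rw [this] at hx
        exact hx (Hset.mul_mem (Hset.inv_mem hy) hmem)
      show (if v (x*y) ∈ Hset v then v (x*y) else 0)
          = (if v x ∈ Hset v then v x else 0) * (if v y ∈ Hset v then v y else 0)
      rw [if_neg hxy, if_neg hx, if_pos hy, zero_mul]
    · have hxy : v (x * y) ∉ Hset v := by
        rw [Valuation.map_mul]
        intro hmem
        have hylt : v y < 1 := Hset.lt_of_not_mem hy (Hset.one_mem v)
        have : v x * v y ≤ v x := by
          calc v x * v y ≤ v x * 1 := mul_le_mul_right hylt.le _
            _ = v x := mul_one _
        have hxlt : v x < v x * v y := Hset.lt_of_not_mem hx hmem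
        exact absurd (hxlt.trans_le this) (lt_irrefl _)
      show (if v (x*y) ∈ Hset v then v (x*y) else 0)
          = (if v x ∈ Hset v then v x else 0) * (if v y ∈ Hset v then v y else 0)
      rw [if_neg hxy, if_neg hx, if_neg hy, zero_mul]
  map_add_le_max' x y := by
    show (if v (x+y) ∈ Hset v then v (x+y) else 0)
        ≤ max (if v x ∈ Hset v then v x else 0) (if v y ∈ Hset v then v y else 0)
    by_cases hxy : v (x + y) ∈ Hset v
    · rw [if_pos hxy]
      rcases le_max_iff.1 (v.map_add x y) with h | h
      · have hx : v x ∈ Hset v := by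
          by_contra hc
          exact absurd ((Hset.lt_of_not_mem hc hxy).trans_le h) (lt_irrefl _)
        refine le_max_iff.2 (Or.inl ?_)
        rwa [if_pos hx]
      · have hy : v y ∈ Hset v := by
          by_contra hc
          exact absurd ((Hset.lt_of_not_mem hc hxy).trans_le h) (lt_irrefl _)
        refine le_max_iff.2 (Or.inr ?_)
        rwa [if_pos hy]
    · rw [if_neg hxy]
      exact le_max_iff.2 (Or.inl zero_le')

open Classical in
lemma trunc_apply (v : Valuation A Γ₀) (a : A) :
    trunc v a = if v a ∈ Hset v then v a else 0 := rfl

end Trunc2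


section Main

variable {A : Type u} [CommRing A] (Aplus : Subring A)
variable {n : ℕ} {m : Fin n → ℕ} (g : ∀ i : Fin n, Fin (m i) → A) (f : Fin n → A)

/-- The covering condition for a "pair" `(i, b)` at a valuation `v`. -/
def Cov (p : Fin n × A) {Γ₀ : Type*} [LinearOrderedCommGroupWithZero Γ₀]
    (v : Valuation A Γ₀) : Prop :=
  1 ≤ v (f p.1 * p.2) ∧ ∀ k, v (g p.1 k * p.2) ≤ v (f p.1 * p.2)

lemma pointwise
    (hcover : ∀ (Γ₀ : Type u) (_ : LinearOrderedCommGroupWithZero Γ₀) (v : Valuation A Γ₀),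
      (∀ a ∈ Aplus, v a ≤ 1) →
      ∃ i : Fin n, (∀ k, v (g i k) ≤ v (f i)) ∧ v (f i) ≠ 0)
    (Γ₀ : Type u) (inst : LinearOrderedCommGroupWithZero Γ₀) (v : Valuation A Γ₀)
    (hv : ∀ a ∈ Aplus, v a ≤ 1) :
    ∃ p : Fin n × A, Cov g f p v := by
  classical
  have hw : ∀ a ∈ Aplus, trunc v a ≤ 1 := by
    intro a ha
    rw [trunc_apply]
    split
    · exact hv a ha
    · exact zero_le'
  obtain ⟨i, hgi, hfi⟩ := hcover Γ₀ inst (trunc v) hw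
  have hfH : v (f i) ∈ Hset v := by
    by_contra hc
    apply hfi
    rw [trunc_apply, if_neg hc]
  obtain ⟨c, hc1, hc2, hc3⟩ := id hfH
  have hc0 : v c ≠ 0 := (zero_lt_one.trans_le hc1).ne'
  refine ⟨(i, c), ?_, ?_⟩
  · show 1 ≤ v (f i * c)
    rw [Valuation.map_mul]
    calc (1:Γ₀) = (v c)⁻¹ * v c := (inv_mul_cancel₀ hc0).symm
      _ ≤ v (f i) * v c := mul_le_mul_left hc2 _
  · intro k
    show v (g i k * c) ≤ v (f i * c)
    rw [Valuation.map_mul, Valuation.map_mul]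
    refine mul_le_mul_left ?_ _
    have hthis := hgi k
    rw [trunc_apply, trunc_apply, if_pos hfH] at hthis
    by_cases hk : v (g i k) ∈ Hset v
    · rwa [if_pos hk] at hthis
    · exact (Hset.lt_of_not_mem hk hfH).le

lemma subcover
    (hcover : ∀ (Γ₀ : Type u) (_ : LinearOrderedCommGroupWithZero Γ₀) (v : Valuation A Γ₀),
      (∀ a ∈ Aplus, v a ≤ 1) →
      ∃ i : Fin n, (∀ k, v (g i k) ≤ v (f i)) ∧ v (f i) ≠ 0) :
    ∃ C₀ : Finset (Fin n × A),
      ∀ (Γ₀ : Type u) (_ : LinearOrderedCommGroupWithZero Γ₀) (v : Valuation A Γ₀),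
        (∀ a ∈ Aplus, v a ≤ 1) → ∃ p ∈ C₀, Cov g f p v := by
  classical
  by_contra hcon
  push_neg at hcon
  -- for each finite set F there is a valuation avoiding all of `Cov p` for `p ∈ F`
  have hch : ∀ F : Finset (Fin n × A),
      ∃ (Γ₀ : Type u) (_ : LinearOrderedCommGroupWithZero Γ₀) (v : Valuation A Γ₀),
        (∀ a ∈ Aplus, v a ≤ 1) ∧ ∀ p ∈ F, ¬ Cov g f p v := by
    intro F
    rcases hcon F with ⟨Γ₀, inst, v, hv, hbad⟩
    exact ⟨Γ₀, inst, v, hv, hbad⟩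
  choose Γ instΓ v hgood hbad using hch
  letI : ∀ F, LinearOrderedCommGroupWithZero (Γ F) := instΓ
  haveI : Nonempty (Finset (Fin n × A)) := ⟨∅⟩
  let U : Ultrafilter (Finset (Fin n × A)) := Ultrafilter.of Filter.atTop
  have hUle : (U : Filter (Finset (Fin n × A))) ≤ Filter.atTop := Ultrafilter.of_le _
  -- the ultraproduct valuation
  have hvstar : ∀ a ∈ Aplus, uVal U Γ v a ≤ 1 := by
    intro a ha
    have : uVal U Γ v a ≤ uVal U Γ v 1 :=
      (uVal_le_iff U Γ v a 1).2 (Filter.Eventually.of_forall fun F => by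
        rw [Valuation.map_one]; exact hgood F a ha)
    rwa [Valuation.map_one] at this
  obtain ⟨p₀, hp1, hp2⟩ := pointwise Aplus g f hcover _ _ (uVal U Γ v) hvstar
  -- transfer the conditions to an ultrafilter set
  have h1 : ∀ᶠ F in (U : Filter (Finset (Fin n × A))), 1 ≤ v F (f p₀.1 * p₀.2) :=
    (one_le_uVal_iff U Γ v _).1 hp1
  have h2 : ∀ᶠ F in (U : Filter (Finset (Fin n × A))),
      ∀ k, v F (g p₀.1 k * p₀.2) ≤ v F (f p₀.1 * p₀.2) :=
    (Filter.eventually_all).2 fun k => (uVal_le_iff U Γ v _ _).1 (hp2 k)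
  have h3 : ∀ᶠ F in (U : Filter (Finset (Fin n × A))), p₀ ∈ F := by
    have : ∀ᶠ F in (Filter.atTop : Filter (Finset (Fin n × A))), {p₀} ≤ F :=
      Filter.eventually_ge_atTop {p₀}
    exact (this.filter_mono hUle).mono fun F hF => hF (Finset.mem_singleton_self p₀)
  obtain ⟨F, ⟨hF1, hF2⟩, hF3⟩ := ((h1.and h2).and h3).exists
  exact hbad F p₀ hF3 ⟨hF1, hF2⟩

end Main


section Triv

variable {A : Type u} [CommRing A]

open Classical in
/-- The trivial valuation attached to a prime ideal. -/
noncomputable def trivVal (M : Ideal A) (hM : M.IsPrime) :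
    Valuation A (WithZero (Multiplicative ℤ)) where
  toFun x := if x ∈ M then 0 else 1
  map_zero' := if_pos M.zero_mem
  map_one' := if_neg (fun h => hM.ne_top ((Ideal.eq_top_iff_one M).2 h))
  map_mul' x y := by
    show (if x * y ∈ M then (0 : WithZero (Multiplicative ℤ)) else 1)
        = (if x ∈ M then (0 : WithZero (Multiplicative ℤ)) else 1)
          * (if y ∈ M then (0 : WithZero (Multiplicative ℤ)) else 1)
    by_cases hx : x ∈ M
    · rw [if_pos hx, if_pos (M.mul_mem_right y hx), zero_mul]
    · by_cases hy : y ∈ M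
      · rw [if_pos (M.mul_mem_left x hy), if_neg hx, if_pos hy, mul_zero]
      · have hxy : x * y ∉ M := fun h => by
          rcases hM.mem_or_mem h with h' | h'
          · exact hx h'
          · exact hy h'
        rw [if_neg hxy, if_neg hx, if_neg hy, mul_one]
  map_add_le_max' x y := by
    show (if x + y ∈ M then (0 : WithZero (Multiplicative ℤ)) else 1)
        ≤ max (if x ∈ M then (0 : WithZero (Multiplicative ℤ)) else 1)
            (if y ∈ M then (0 : WithZero (Multiplicative ℤ)) else 1)
    by_cases hx : x ∈ M
    · by_cases hy : y ∈ M
      · rw [if_pos (M.add_mem hx hy)]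
        exact le_max_iff.2 (Or.inl (by rw [if_pos hx]))
      · refine le_max_iff.2 (Or.inr ?_)
        rw [if_neg hy]
        split
        · exact zero_le_one
        · exact le_refl _
    · refine le_max_iff.2 (Or.inl ?_)
      rw [if_neg hx]
      split
      · exact zero_le_one
      · exact le_refl _

open Classical in
lemma trivVal_apply (M : Ideal A) (hM : M.IsPrime) (x : A) :
    trivVal M hM x = if x ∈ M then 0 else 1 := rfl

/-- A `Type u` instance of the trivial valuation, obtained through the one-point
ultraproduct. -/
noncomputable def trivValU (M : Ideal A) (hM : M.IsPrime) :
    Valuation A (UProd (pure PUnit.unit : Ultrafilter PUnit.{u+1})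
      (fun _ => WithZero (Multiplicative ℤ))) :=
  uVal _ _ (fun _ => trivVal M hM)

lemma trivValU_le_one (M : Ideal A) (hM : M.IsPrime) :
    ∀ a : A, trivValU.{u} M hM a ≤ 1 := by
  intro a
  have : trivValU.{u} M hM a ≤ trivValU.{u} M hM 1 := by
    refine (uVal_le_iff _ _ _ a 1).2 ?_
    refine Filter.Eventually.of_forall fun _ => ?_
    rw [trivVal_apply, trivVal_apply]
    split
    · split
      · exact le_refl _
      · exact zero_le_one
    · split
      · exact absurd ‹(1:A) ∈ M› (fun h => hM.ne_top ((Ideal.eq_top_iff_one M).2 h))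
      · exact le_refl _
  rwa [Valuation.map_one] at this

lemma trivValU_one_le_iff (M : Ideal A) (hM : M.IsPrime) (a : A) :
    1 ≤ trivValU.{u} M hM a ↔ a ∉ M := by
  rw [trivValU, one_le_uVal_iff]
  constructor
  · intro h hm
    have := h.exists
    rcases this with ⟨_, h'⟩
    rw [trivVal_apply, if_pos hm] at h'
    exact absurd h' (by simp)
  · intro hm
    refine Filter.Eventually.of_forall fun _ => ?_
    rw [trivVal_apply, if_neg hm]

end Triv


section Assemble

variable {A : Type u} [CommRing A] {n : ℕ} {m : Fin n → ℕ}

/-- Atoms: an index of one of the `g`'s together with its pair. -/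
@[reducible] def AtT (A : Type u) (n : ℕ) (m : Fin n → ℕ) : Type u :=
  (p : Fin n × A) × Fin (m p.1)

variable (g : ∀ i : Fin n, Fin (m i) → A) (f : Fin n → A)

def elemAt (a : AtT A n m) : A := g a.1.1 a.2 * a.1.2

/-- `σ` of an enriched pair. -/
def sigEl (q : (Fin n × A) × Finset (AtT A n m)) : A :=
  f q.1.1 * q.1.2 * ∏ a ∈ q.2, elemAt g a

/-- the `g`-companions of an enriched pair. -/
def xEl (q : (Fin n × A) × Finset (AtT A n m)) (k : Fin (m q.1.1)) : A :=
  g q.1.1 k * q.1.2 * ∏ a ∈ q.2, elemAt g a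

open Classical in
/-- The finite set of enriched pairs built on a finite set of basic pairs `C₀`. -/
noncomputable def Pset (C₀ : Finset (Fin n × A)) :
    Finset ((Fin n × A) × Finset (AtT A n m)) :=
  (C₀ ×ˢ (C₀.sigma (fun p => (Finset.univ : Finset (Fin (m p.1))))).powerset).filter
    (fun q => (∀ a ∈ q.2, a.1 ≠ q.1) ∧ (∀ a ∈ q.2, ∀ a' ∈ q.2, a.1 = a'.1 → a = a'))

lemma mem_Pset {C₀ : Finset (Fin n × A)} {q : (Fin n × A) × Finset (AtT A n m)} :
    q ∈ Pset C₀ ↔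
      q.1 ∈ C₀ ∧ (∀ a ∈ q.2, a.1 ∈ C₀) ∧
      (∀ a ∈ q.2, a.1 ≠ q.1) ∧ (∀ a ∈ q.2, ∀ a' ∈ q.2, a.1 = a'.1 → a = a') := by
  classical
  unfold Pset
  rw [Finset.mem_filter, Finset.mem_product, Finset.mem_powerset]
  constructor
  · rintro ⟨⟨h1, h2⟩, h3, h4⟩
    refine ⟨h1, ?_, h3, h4⟩
    intro a ha
    have := h2 ha
    rw [Finset.mem_sigma] at this
    exact this.1
  · rintro ⟨h1, h2, h3, h4⟩
    refine ⟨⟨h1, ?_⟩, h3, h4⟩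
    intro a ha
    rw [Finset.mem_sigma]
    exact ⟨h2 a ha, Finset.mem_univ _⟩

/-- Index type of the final family. -/
@[reducible] def JT (A : Type u) (n : ℕ) (m : Fin n → ℕ) : Type u :=
  (((Fin n × A) × Finset (AtT A n m)) × ((Fin n × A) × Finset (AtT A n m))) ⊕
    ((q : (Fin n × A) × Finset (AtT A n m)) × Fin (m q.1.1))

noncomputable def TFset (C₀ : Finset (Fin n × A)) : Finset (JT A n m) :=
  ((Pset (m := m) C₀) ×ˢ (Pset C₀)).disjSum
    ((Pset C₀).sigma (fun q => (Finset.univ : Finset (Fin (m q.1.1)))))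

def valJ : JT A n m → A :=
  Sum.elim (fun qq => sigEl g f qq.1 * sigEl g f qq.2)
    (fun qk => xEl g qk.1 qk.2 * sigEl g f qk.1)

def tagJ : JT A n m → Fin n :=
  Sum.elim (fun qq => qq.2.1.1) (fun qk => qk.1.1.1)

/-- Cofactor cancellation. -/
lemma cancel_aux {Γ₀ : Type*} [LinearOrderedCommGroupWithZero Γ₀]
    (v : Valuation A Γ₀) (i : Fin n) (c : A)
    (hle : ∀ k, v (g i k * c) ≤ v (f i * c)) (hne : v (f i * c) ≠ 0) :
    (∀ k, v (g i k) ≤ v (f i)) ∧ v (f i) ≠ 0 := by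
  rw [Valuation.map_mul] at hne
  have hfne : v (f i) ≠ 0 := fun h => hne (by rw [h, zero_mul])
  have hcne : v c ≠ 0 := fun h => hne (by rw [h, mul_zero])
  refine ⟨fun k => ?_, hfne⟩
  have := hle k
  rw [Valuation.map_mul, Valuation.map_mul] at this
  exact le_of_mul_le_mul_right this (pos_of_ne_zero hcne)

/-- The key containment: every member of the final family, seen as the "center",
has its cell contained in the rational set attached to its tag. -/
lemma key_contain (C₀ : Finset (Fin n × A))
    (e : JT A n m) (he : e ∈ TFset (m := m) C₀)
    {Γ₀ : Type*} [LinearOrderedCommGroupWithZero Γ₀] (v : Valuation A Γ₀)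
    (hcov : ∃ p ∈ C₀, Cov g f p v)
    (hmax : ∀ e' ∈ TFset (m := m) C₀, v (valJ g f e') ≤ v (valJ g f e))
    (hne : v (valJ g f e) ≠ 0) :
    (∀ k, v (g (tagJ e) k) ≤ v (f (tagJ e))) ∧ v (f (tagJ e)) ≠ 0 := by
  classical
  obtain ⟨γ', hγ'C, hcγ'⟩ := hcov
  rcases e with ⟨q₁, q₂⟩ | ⟨q, k₀⟩
  · -- σσ-center
    rw [TFset, Finset.inl_mem_disjSum, Finset.mem_product] at he
    obtain ⟨hq₁, hq₂⟩ := he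
    have hval : valJ g f (Sum.inl (q₁, q₂)) = sigEl g f q₁ * sigEl g f q₂ := rfl
    rw [hval, Valuation.map_mul] at hne hmax
    have ha : v (sigEl g f q₁) ≠ 0 := fun h => hne (by rw [h, zero_mul])
    have hb : v (sigEl g f q₂) ≠ 0 := fun h => hne (by rw [h, mul_zero])
    -- b ≤ a
    have c1 := hmax (Sum.inl (q₂, q₂)) (by
      rw [TFset, Finset.inl_mem_disjSum, Finset.mem_product]; exact ⟨hq₂, hq₂⟩)
    rw [show valJ g f (Sum.inl (q₂, q₂)) = sigEl g f q₂ * sigEl g f q₂ from rfl,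
      Valuation.map_mul] at c1
    have hba : v (sigEl g f q₂) ≤ v (sigEl g f q₁) :=
      le_of_mul_le_mul_right c1 (pos_of_ne_zero hb)
    -- the companions
    have hcomp : ∀ k, v (xEl g q₂ k) ≤ v (sigEl g f q₂) := by
      intro k
      have c3 := hmax (Sum.inr ⟨q₂, k⟩) (by
        rw [TFset, Finset.inr_mem_disjSum, Finset.mem_sigma]
        exact ⟨hq₂, Finset.mem_univ _⟩)
      rw [show valJ g f (Sum.inr ⟨q₂, k⟩) = xEl g q₂ k * sigEl g f q₂ from rfl,
        Valuation.map_mul] at c3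
      -- v(x) * b ≤ a * b, so v(x) ≤ a; also a ≤ b
      have c2 := hmax (Sum.inl (q₁, q₁)) (by
        rw [TFset, Finset.inl_mem_disjSum, Finset.mem_product]; exact ⟨hq₁, hq₁⟩)
      rw [show valJ g f (Sum.inl (q₁, q₁)) = sigEl g f q₁ * sigEl g f q₁ from rfl,
        Valuation.map_mul] at c2
      have hab : v (sigEl g f q₁) ≤ v (sigEl g f q₂) := by
        have : v (sigEl g f q₁) * v (sigEl g f q₁) ≤ v (sigEl g f q₂) * v (sigEl g f q₁) := by
          calc v (sigEl g f q₁) * v (sigEl g f q₁) ≤ v (sigEl g f q₁) * v (sigEl g f q₂) := c2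
            _ = v (sigEl g f q₂) * v (sigEl g f q₁) := mul_comm _ _
        exact le_of_mul_le_mul_right this (pos_of_ne_zero ha)
      have hx1 : v (xEl g q₂ k) ≤ v (sigEl g f q₁) :=
        le_of_mul_le_mul_right c3 (pos_of_ne_zero hb)
      exact hx1.trans hab
    -- conclude
    have : ∀ k, v (g q₂.1.1 k * (q₂.1.2 * ∏ a ∈ q₂.2, elemAt g a))
        ≤ v (f q₂.1.1 * (q₂.1.2 * ∏ a ∈ q₂.2, elemAt g a)) := by
      intro k
      have := hcomp k
      rw [xEl, sigEl, mul_assoc, mul_assoc] at this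
      exact this
    have hne2 : v (f q₂.1.1 * (q₂.1.2 * ∏ a ∈ q₂.2, elemAt g a)) ≠ 0 := by
      rw [← mul_assoc]
      exact hb
    exact cancel_aux g f v q₂.1.1 _ this hne2
  · -- x-center
    rw [TFset, Finset.inr_mem_disjSum, Finset.mem_sigma] at he
    obtain ⟨hq, -⟩ := he
    have hval : valJ g f (Sum.inr ⟨q, k₀⟩) = xEl g q k₀ * sigEl g f q := rfl
    rw [hval, Valuation.map_mul] at hne hmax
    have hξ : v (xEl g q k₀) ≠ 0 := fun h => hne (by rw [h, zero_mul])
    have hvs : v (sigEl g f q) ≠ 0 := fun h => hne (by rw [h, mul_zero])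
    -- the companions are dominated by ξ
    have hcomp : ∀ k, v (xEl g q k) ≤ v (xEl g q k₀) := by
      intro k
      have c3 := hmax (Sum.inr ⟨q, k⟩) (by
        rw [TFset, Finset.inr_mem_disjSum, Finset.mem_sigma]
        exact ⟨hq, Finset.mem_univ _⟩)
      rw [show valJ g f (Sum.inr ⟨q, k⟩) = xEl g q k * sigEl g f q from rfl,
        Valuation.map_mul] at c3
      exact le_of_mul_le_mul_right c3 (pos_of_ne_zero hvs)
    -- key claim : ξ ≤ v (σ q)
    have hkey : v (xEl g q k₀) ≤ v (sigEl g f q) := by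
      by_contra hlt
      push_neg at hlt
      -- build a dominating enriched pair qs ∈ Pset with ξ ≤ v (σ qs)
      have hqP := mem_Pset.1 hq
      set a₀ : AtT A n m := ⟨q.1, k₀⟩ with ha₀
      have ha₀S : a₀ ∉ q.2 := fun hmem => (hqP.2.2.1 a₀ hmem) rfl
      have hxprod : xEl g q k₀ = ∏ a ∈ insert a₀ q.2, elemAt g a := by
        rw [Finset.prod_insert ha₀S]
        rfl
      have hdom : ∃ qs ∈ Pset (m := m) C₀, v (xEl g q k₀) ≤ v (sigEl g f qs) := by
        by_cases hcase : ∀ a ∈ insert a₀ q.2, a.1 ≠ γ'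
        · -- Case A : fresh cover pair
          refine ⟨(γ', insert a₀ q.2), ?_, ?_⟩
          · rw [mem_Pset]
            refine ⟨hγ'C, ?_, hcase, ?_⟩
            · intro a ha
              rcases Finset.mem_insert.1 ha with h | h
              · rw [h]; exact hqP.1
              · exact hqP.2.1 a h
            · intro a ha a' ha' haa
              rcases Finset.mem_insert.1 ha with h | h <;>
                rcases Finset.mem_insert.1 ha' with h' | h'
              · rw [h, h']
              · exfalso; exact (hqP.2.2.1 a' h') (by rw [← haa, h])
              · exfalso; exact (hqP.2.2.1 a h) (by rw [haa, h'])
              · exact hqP.2.2.2 a h a' h' haa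
          · rw [hxprod]
            show v (∏ a ∈ insert a₀ q.2, elemAt g a)
              ≤ v (f γ'.1 * γ'.2 * ∏ a ∈ insert a₀ q.2, elemAt g a)
            rw [Valuation.map_mul]
            calc v (∏ a ∈ insert a₀ q.2, elemAt g a)
                = 1 * v (∏ a ∈ insert a₀ q.2, elemAt g a) := (one_mul _).symm
              _ ≤ v (f γ'.1 * γ'.2) * v (∏ a ∈ insert a₀ q.2, elemAt g a) :=
                  mul_le_mul_left hcγ'.1 _
        · -- Case B : γ' appears among the atoms
          push_neg at hcase
          obtain ⟨a'', ha''mem, ha''cl⟩ := hcase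
          refine ⟨(γ', (insert a₀ q.2).erase a''), ?_, ?_⟩
          · rw [mem_Pset]
            have hsub : (insert a₀ q.2).erase a'' ⊆ insert a₀ q.2 := Finset.erase_subset _ _
            have hinj : ∀ a ∈ insert a₀ q.2, ∀ a' ∈ insert a₀ q.2, a.1 = a'.1 → a = a' := by
              intro a ha a' ha' haa
              rcases Finset.mem_insert.1 ha with h | h <;>
                rcases Finset.mem_insert.1 ha' with h' | h'
              · rw [h, h']
              · exfalso; exact (hqP.2.2.1 a' h') (by rw [← haa, h])
              · exfalso; exact (hqP.2.2.1 a h) (by rw [haa, h'])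
              · exact hqP.2.2.2 a h a' h' haa
            refine ⟨hγ'C, ?_, ?_, ?_⟩
            · intro a ha
              rcases Finset.mem_insert.1 (hsub ha) with h | h
              · rw [h]; exact hqP.1
              · exact hqP.2.1 a h
            · intro a ha hcl
              have hane : a ≠ a'' := (Finset.mem_erase.1 ha).1
              have : a = a'' := hinj a (hsub ha) a'' ha''mem (by rw [hcl, ha''cl])
              exact hane this
            · intro a ha a' ha' haa
              exact hinj a (hsub ha) a' (hsub ha') haa
          · -- ξ ≤ v (σ (γ', erase))
            have hsplit : elemAt g a'' * ∏ a ∈ (insert a₀ q.2).erase a'', elemAt g a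
                = ∏ a ∈ insert a₀ q.2, elemAt g a :=
              Finset.mul_prod_erase _ _ ha''mem
            have hbound : v (elemAt g a'') ≤ v (f γ'.1 * γ'.2) := by
              obtain ⟨pa, ka⟩ := a''
              simp only at ha''cl
              subst ha''cl
              exact hcγ'.2 ka
            rw [hxprod, ← hsplit]
            show v (elemAt g a'' * ∏ a ∈ (insert a₀ q.2).erase a'', elemAt g a)
              ≤ v (f γ'.1 * γ'.2 * ∏ a ∈ (insert a₀ q.2).erase a'', elemAt g a)
            rw [Valuation.map_mul, Valuation.map_mul]
            exact mul_le_mul_left hbound _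
      obtain ⟨qs, hqsP, hqsdom⟩ := hdom
      -- now the square of σ qs is in the family, giving a contradiction
      have c4 := hmax (Sum.inl (qs, qs)) (by
        rw [TFset, Finset.inl_mem_disjSum, Finset.mem_product]; exact ⟨hqsP, hqsP⟩)
      rw [show valJ g f (Sum.inl (qs, qs)) = sigEl g f qs * sigEl g f qs from rfl,
        Valuation.map_mul] at c4
      have : v (xEl g q k₀) * v (xEl g q k₀) ≤ v (sigEl g f q) * v (xEl g q k₀) := by
        calc v (xEl g q k₀) * v (xEl g q k₀)
            ≤ v (sigEl g f qs) * v (sigEl g f qs) := mul_le_mul' hqsdom hqsdom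
          _ ≤ v (xEl g q k₀) * v (sigEl g f q) := c4
          _ = v (sigEl g f q) * v (xEl g q k₀) := mul_comm _ _
      have hle : v (xEl g q k₀) ≤ v (sigEl g f q) :=
        le_of_mul_le_mul_right this (pos_of_ne_zero hξ)
      exact absurd hle (not_le.2 hlt)
    -- conclude
    have hall : ∀ k, v (g q.1.1 k * (q.1.2 * ∏ a ∈ q.2, elemAt g a))
        ≤ v (f q.1.1 * (q.1.2 * ∏ a ∈ q.2, elemAt g a)) := by
      intro k
      have := (hcomp k).trans hkey
      rw [xEl, sigEl, mul_assoc, mul_assoc] at this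
      exact this
    have hne2 : v (f q.1.1 * (q.1.2 * ∏ a ∈ q.2, elemAt g a)) ≠ 0 := by
      rw [← mul_assoc]
      exact hvs
    exact cancel_aux g f v q.1.1 _ hall hne2

end Assemble

end StdRefine


theorem exists_standard_rational_refinement
    {A : Type u} [CommRing A] (Aplus : Subring A)
    (hint : ∀ x : A, IsIntegral Aplus x → x ∈ Aplus)
    (n : ℕ) (m : Fin n → ℕ) (g : ∀ i : Fin n, Fin (m i) → A) (f : Fin n → A)
    (hcover : ∀ (Γ₀ : Type u) (_ : LinearOrderedCommGroupWithZero Γ₀) (v : Valuation A Γ₀),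
      (∀ a ∈ Aplus, v a ≤ 1) →
      ∃ i : Fin n, (∀ k, v (g i k) ≤ v (f i)) ∧ v (f i) ≠ 0) :
    ∃ (N : ℕ) (s : Fin N → A),
      Ideal.span (Set.range s) = ⊤ ∧
      ∀ j : Fin N, ∃ i : Fin n,
        ∀ (Γ₀ : Type u) (_ : LinearOrderedCommGroupWithZero Γ₀) (v : Valuation A Γ₀),
          (∀ a ∈ Aplus, v a ≤ 1) →
          ((∀ j' : Fin N, v (s j') ≤ v (s j)) ∧ v (s j) ≠ 0) →
          ((∀ k, v (g i k) ≤ v (f i)) ∧ v (f i) ≠ 0) := by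
  classical
  obtain ⟨C₀, hC₀⟩ := StdRefine.subcover Aplus g f hcover
  refine ⟨(StdRefine.TFset (m := m) C₀).toList.length,
    fun j => StdRefine.valJ g f ((StdRefine.TFset (m := m) C₀).toList.get j), ?_, ?_⟩
  · -- the span is everything
    by_contra hspan
    obtain ⟨M, hMmax, hMle⟩ := Ideal.exists_le_maximal _ hspan
    have hMp : M.IsPrime := hMmax.isPrime
    have hgood : ∀ a ∈ Aplus, StdRefine.trivValU.{u} M hMp a ≤ 1 := fun a _ =>
      StdRefine.trivValU_le_one M hMp a
    obtain ⟨γ, hγC, hγcov⟩ := hC₀ _ _ (StdRefine.trivValU.{u} M hMp) hgood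
    have hnotM : f γ.1 * γ.2 ∉ M := (StdRefine.trivValU_one_le_iff M hMp _).1 hγcov.1
    have hqmem : ((γ, (∅ : Finset (StdRefine.AtT A n m))), (γ, (∅ : Finset (StdRefine.AtT A n m))))
        ∈ (StdRefine.Pset (m := m) C₀) ×ˢ (StdRefine.Pset (m := m) C₀) := by
      rw [Finset.mem_product]
      constructor <;>
        (rw [StdRefine.mem_Pset]
         exact ⟨hγC, by intro a ha; exact absurd ha (Finset.notMem_empty a),
           by intro a ha; exact absurd ha (Finset.notMem_empty a),
           by intro a ha; exact absurd ha (Finset.notMem_empty a)⟩)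
    have hjmem : (Sum.inl ((γ, (∅ : Finset (StdRefine.AtT A n m))), (γ, ∅)) : StdRefine.JT A n m)
        ∈ StdRefine.TFset (m := m) C₀ := by
      rw [StdRefine.TFset, Finset.inl_mem_disjSum]
      exact hqmem
    obtain ⟨idx, hidx⟩ := List.mem_iff_get.1 (Finset.mem_toList.2 hjmem)
    have hmem : StdRefine.valJ g f ((StdRefine.TFset (m := m) C₀).toList.get idx) ∈ M :=
      hMle (Ideal.subset_span ⟨idx, rfl⟩)
    rw [hidx] at hmem
    have hval : StdRefine.valJ g f
        (Sum.inl ((γ, (∅ : Finset (StdRefine.AtT A n m))), (γ, ∅)) : StdRefine.JT A n m)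
        = (f γ.1 * γ.2 * 1) * (f γ.1 * γ.2 * 1) := by
      show StdRefine.sigEl g f (γ, ∅) * StdRefine.sigEl g f (γ, ∅) = _
      rw [StdRefine.sigEl, Finset.prod_empty]
    rw [hval, mul_one] at hmem
    rcases hMp.mem_or_mem hmem with h | h <;> exact hnotM h
  · -- each member of the cover refines some `U_i`
    intro j
    refine ⟨StdRefine.tagJ ((StdRefine.TFset (m := m) C₀).toList.get j), ?_⟩
    intro Γ₀ inst v hv hcell
    have hemem : (StdRefine.TFset (m := m) C₀).toList.get j ∈ StdRefine.TFset (m := m) C₀ :=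
      Finset.mem_toList.1 (List.get_mem _ j)
    refine StdRefine.key_contain g f C₀ _ hemem v (hC₀ Γ₀ inst v hv) ?_ hcell.2
    intro e' he'
    obtain ⟨j', hj'⟩ := List.mem_iff_get.1 (Finset.mem_toList.2 he')
    rw [← hj']
    exact hcell.1 j'
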